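/- The fourth-order radial operator factorizes: for m ∈ ℤ and a C⁴ function φ on (0,∞), with ρ denoting the variable, [ρ⁴∂_ρ⁴ + 2ρ³∂_ρ³ + (ρ² − 2m² − 1)ρ²∂_ρ² + (ρ² + 2m² + 1)ρ∂_ρ − (ρ² + 4 − m²)m²] φ = [ρ²∂_ρ² − 3ρ∂_ρ + (4 − m²)][ρ²∂_ρ² + ρ∂_ρ + (ρ² − m²)] φ. -/

import Mathlib

/-- factorization of the fourth-order radial operator. -/
theorem stmt17 (m : ℤ) (φ : ℝ → ℂ) (hφ : ContDiffOn ℝ 4 φ (Set.Ioi 0))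
    (ρ : ℝ) (hρ : 0 < ρ) :
    (ρ : ℂ) ^ 4 * iteratedDeriv 4 φ ρ + 2 * (ρ : ℂ) ^ 3 * iteratedDeriv 3 φ ρ
      + ((ρ : ℂ) ^ 2 - 2 * (m : ℂ) ^ 2 - 1) * (ρ : ℂ) ^ 2 * iteratedDeriv 2 φ ρ
      + ((ρ : ℂ) ^ 2 + 2 * (m : ℂ) ^ 2 + 1) * (ρ : ℂ) * deriv φ ρ
      - ((ρ : ℂ) ^ 2 + 4 - (m : ℂ) ^ 2) * (m : ℂ) ^ 2 * φ ρ
    = (ρ : ℂ) ^ 2 * iteratedDeriv 2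
          (fun s : ℝ => (s : ℂ) ^ 2 * iteratedDeriv 2 φ s + (s : ℂ) * deriv φ s
            + ((s : ℂ) ^ 2 - (m : ℂ) ^ 2) * φ s) ρ
      - 3 * (ρ : ℂ) * deriv
          (fun s : ℝ => (s : ℂ) ^ 2 * iteratedDeriv 2 φ s + (s : ℂ) * deriv φ s
            + ((s : ℂ) ^ 2 - (m : ℂ) ^ 2) * φ s) ρ
      + (4 - (m : ℂ) ^ 2) *
          ((ρ : ℂ) ^ 2 * iteratedDeriv 2 φ ρ + (ρ : ℂ) * deriv φ ρ
            + ((ρ : ℂ) ^ 2 - (m : ℂ) ^ 2) * φ ρ) := by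
  have hO : IsOpen (Set.Ioi (0:ℝ)) := isOpen_Ioi
  have h1 : ContDiffOn ℝ 3 (deriv φ) (Set.Ioi 0) :=
    hφ.deriv_of_isOpen hO (by norm_num : (3:WithTop ℕ∞) + 1 ≤ 4)
  have h2 : ContDiffOn ℝ 2 (deriv (deriv φ)) (Set.Ioi 0) :=
    h1.deriv_of_isOpen hO (by norm_num : (2:WithTop ℕ∞) + 1 ≤ 3)
  have h3 : ContDiffOn ℝ 1 (deriv (deriv (deriv φ))) (Set.Ioi 0) :=
    h2.deriv_of_isOpen hO (by norm_num : (1:WithTop ℕ∞) + 1 ≤ 2)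
  have d0 : ∀ x ∈ Set.Ioi (0:ℝ), DifferentiableAt ℝ φ x := fun x hx =>
    (hφ.differentiableOn (by norm_num)).differentiableAt (hO.mem_nhds hx)
  have d1 : ∀ x ∈ Set.Ioi (0:ℝ), DifferentiableAt ℝ (deriv φ) x := fun x hx =>
    (h1.differentiableOn (by norm_num)).differentiableAt (hO.mem_nhds hx)
  have d2 : ∀ x ∈ Set.Ioi (0:ℝ), DifferentiableAt ℝ (deriv (deriv φ)) x := fun x hx =>
    (h2.differentiableOn (by norm_num)).differentiableAt (hO.mem_nhds hx)
  have d3 : ∀ x ∈ Set.Ioi (0:ℝ), DifferentiableAt ℝ (deriv (deriv (deriv φ))) x := fun x hx =>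
    (h3.differentiableOn (by norm_num)).differentiableAt (hO.mem_nhds hx)
  have hr : ∀ x : ℝ, HasDerivAt (fun s : ℝ => (s : ℂ)) 1 x := fun x => by
    exact Complex.ofRealCLM.hasDerivAt
  have hsq : ∀ x : ℝ, HasDerivAt (fun s : ℝ => (s : ℂ)^2) (2*(x:ℂ)) x := fun x => by
    have h := (hr x).mul (hr x); simp only [pow_two, two_mul, one_mul, mul_one] at h ⊢; exact h
  -- rewrite iterated derivatives
  have e2 : iteratedDeriv 2 φ = deriv (deriv φ) := by
    rw [iteratedDeriv_succ, iteratedDeriv_one]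
  have e3 : iteratedDeriv 3 φ = deriv (deriv (deriv φ)) := by
    rw [iteratedDeriv_succ, iteratedDeriv_succ, iteratedDeriv_one]
  have e4 : iteratedDeriv 4 φ = deriv (deriv (deriv (deriv φ))) := by
    rw [iteratedDeriv_succ, iteratedDeriv_succ, iteratedDeriv_succ, iteratedDeriv_one]
  -- the derivative of the inner function
  have key : ∀ x ∈ Set.Ioi (0:ℝ), HasDerivAt
      (fun s : ℝ => (s : ℂ) ^ 2 * deriv (deriv φ) s + (s : ℂ) * deriv φ s
        + ((s : ℂ) ^ 2 - (m : ℂ) ^ 2) * φ s)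
      (2 * (x:ℂ) * deriv (deriv φ) x + (x:ℂ)^2 * deriv (deriv (deriv φ)) x + deriv φ x
        + (x:ℂ) * deriv (deriv φ) x + 2 * (x:ℂ) * φ x
        + ((x:ℂ)^2 - (m:ℂ)^2) * deriv φ x) x := by
    intro x hx
    have A := (hsq x).mul (d2 x hx).hasDerivAt
    have B := (hr x).mul (d1 x hx).hasDerivAt
    have C := ((hsq x).sub_const ((m:ℂ)^2)).mul (d0 x hx).hasDerivAt
    convert (A.add B).add C using 1
    · rfl
    · rfl
    · ring
  -- the derivative of the derivative of the inner function
  have key2 : HasDerivAt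
      (fun s : ℝ => 2 * (s:ℂ) * deriv (deriv φ) s + (s:ℂ)^2 * deriv (deriv (deriv φ)) s
        + deriv φ s + (s:ℂ) * deriv (deriv φ) s + 2 * (s:ℂ) * φ s
        + ((s:ℂ)^2 - (m:ℂ)^2) * deriv φ s)
      ((ρ:ℂ)^2 * deriv (deriv (deriv (deriv φ))) ρ + 5 * (ρ:ℂ) * deriv (deriv (deriv φ)) ρ
        + (4 + (ρ:ℂ)^2 - (m:ℂ)^2) * deriv (deriv φ) ρ + 4 * (ρ:ℂ) * deriv φ ρ
        + 2 * φ ρ) ρ := by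
    have A := (((hr ρ).const_mul (2:ℂ)).mul (d2 ρ hρ).hasDerivAt)
    have B := (hsq ρ).mul (d3 ρ hρ).hasDerivAt
    have C := (d1 ρ hρ).hasDerivAt
    have D := (hr ρ).mul (d2 ρ hρ).hasDerivAt
    have E := ((hr ρ).const_mul (2:ℂ)).mul (d0 ρ hρ).hasDerivAt
    have F := ((hsq ρ).sub_const ((m:ℂ)^2)).mul (d1 ρ hρ).hasDerivAt
    convert ((((A.add B).add C).add D).add E).add F using 1
    · rfl
    · rfl
    · ring
  simp only [e2, e3, e4]
  have eg : ∀ f : ℝ → ℂ, iteratedDeriv 2 f = deriv (deriv f) := fun f => by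
    rw [iteratedDeriv_succ, iteratedDeriv_one]
  rw [eg]
  have hev : deriv (fun s : ℝ => (s : ℂ) ^ 2 * deriv (deriv φ) s + (s : ℂ) * deriv φ s
        + ((s : ℂ) ^ 2 - (m : ℂ) ^ 2) * φ s)
      =ᶠ[nhds ρ] (fun s : ℝ => 2 * (s:ℂ) * deriv (deriv φ) s
        + (s:ℂ)^2 * deriv (deriv (deriv φ)) s + deriv φ s + (s:ℂ) * deriv (deriv φ) s
        + 2 * (s:ℂ) * φ s + ((s:ℂ)^2 - (m:ℂ)^2) * deriv φ s) := by
    filter_upwards [hO.mem_nhds hρ] with x hx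
    exact (key x hx).deriv
  rw [hev.deriv_eq, key2.deriv, (key ρ hρ).deriv]
  ring
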